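/- Let p, q be coprime positive integers with p < q, let ℓ be a positive integer, set τ_ℓ = 2^{2ℓ-1}, and assume τ_ℓ ≤ 3p+3q ≤ 2τ_ℓ. Then rank(A,b) = rank(A) + 1, where (A,b) denotes the matrix A augmented by the column b. -/

import Mathlib

/-- The `(3p+3q+1) × (3p+3q-τ+1)` matrix whose `n`-th column is the coefficient
vector of `x^(n-1)·(1 + x^τ)` (indices here start at 0). -/
def cornerA (p q τ : ℕ) : Matrix (Fin (3*p+3*q+1)) (Fin (3*p+3*q-τ+1)) ℚ :=
  Matrix.of fun m n => if (m : ℕ) = (n : ℕ) ∨ (m : ℕ) = (n : ℕ) + τ then 1 else 0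

/-- The coefficient vector of `1 + x^(3p) + x^(3q) + x^(3p+3q)`. -/
def cornerb (p q : ℕ) : Fin (3*p+3*q+1) → ℚ :=
  fun m => if (m : ℕ) = 0 ∨ (m : ℕ) = 3*p ∨ (m : ℕ) = 3*q ∨ (m : ℕ) = 3*p+3*q
    then 1 else 0

/-- The augmented matrix `(A, b)`. -/
def cornerAb (p q τ : ℕ) : Matrix (Fin (3*p+3*q+1)) (Fin (3*p+3*q-τ+1+1)) ℚ :=
  Matrix.of fun m n =>
    if h : (n : ℕ) < 3*p+3*q-τ+1 then cornerA p q τ m ⟨n, h⟩ else cornerb p q m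

theorem rank_succ_of_small (p q l : ℕ) (hp : 0 < p) (hpq : p < q)
    (hco : Nat.Coprime p q) (hl : 0 < l) (hτ : 2^(2*l-1) ≤ 3*p+3*q)
    (hle : 3*p+3*q ≤ 2 * 2^(2*l-1)) :
    (cornerAb p q (2^(2*l-1))).rank = (cornerA p q (2^(2*l-1))).rank + 1 := by
  set τ := 2^(2*l-1) with hτdef
  -- basic arithmetic facts
  have h2τ : 2 ≤ τ := by
    have h1 : 1 ≤ 2*l-1 := by omega
    calc (2:ℕ) = 2^1 := rfl
    _ ≤ τ := Nat.pow_le_pow_right (by norm_num) h1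
  have h3 : ¬ (3 ∣ τ) := by
    intro h
    have := (Nat.Prime.dvd_of_dvd_pow (p := 3) (by norm_num) h)
    omega
  have hN3 : (3:ℕ) ∣ 3*p+3*q := ⟨p+q, by ring⟩
  have hNlt : 3*p+3*q < 2*τ := by
    rcases lt_or_eq_of_le hle with h | h
    · exact h
    · exfalso
      rw [h] at hN3
      rcases (Nat.Prime.dvd_mul (by norm_num)).1 hN3 with h' | h'
      · omega
      · exact h3 h'
  have h3p : 3*p < τ := by omega
  have hτ3q : τ ≠ 3*q := by
    intro h; exact h3 ⟨q, h⟩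
  have hτN : τ ≠ 3*p+3*q := by
    intro h; exact h3 (h ▸ hN3)
  -- b is nonzero
  have hbne : cornerb p q ≠ 0 := by
    intro h
    have := congrFun h ⟨0, by omega⟩
    simp [cornerb] at this
  -- b is not in the span of the columns of A
  have hbnotin : cornerb p q ∉ Submodule.span ℚ (Set.range (cornerA p q τ).transpose) := by
    change cornerb p q ∉ Submodule.span ℚ (Set.range (cornerA p q τ).col)
    rw [← Matrix.range_mulVecLin]
    rintro ⟨v, hv⟩
    rw [Matrix.mulVecLin_apply] at hv
    set n0 : Fin (3*p+3*q-τ+1) := ⟨0, by omega⟩ with hn0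
    have e0 : (cornerA p q τ).mulVec v ⟨0, by omega⟩ = v n0 := by
      unfold Matrix.mulVec dotProduct
      rw [Finset.sum_eq_single n0]
      · simp [cornerA, n0]
      · intro n _ hn
        have hnv : (n:ℕ) ≠ 0 := fun h => hn (Fin.ext h)
        have hc : ¬ (((⟨0, by omega⟩ : Fin (3*p+3*q+1)) : ℕ) = (n:ℕ) ∨
            ((⟨0, by omega⟩ : Fin (3*p+3*q+1)) : ℕ) = (n:ℕ) + τ) := by
          simp only [Fin.val_mk]
          omega
        simp [cornerA, hc]
      · intro h; exact absurd (Finset.mem_univ _) h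
    have eτ : (cornerA p q τ).mulVec v ⟨τ, by omega⟩ = v n0 := by
      unfold Matrix.mulVec dotProduct
      rw [Finset.sum_eq_single n0]
      · have hc : ((⟨τ, by omega⟩ : Fin (3*p+3*q+1)) : ℕ) = (n0:ℕ) ∨
            ((⟨τ, by omega⟩ : Fin (3*p+3*q+1)) : ℕ) = (n0:ℕ) + τ := by
          right; simp [n0]
        simp only [cornerA, Matrix.of_apply, if_pos hc, one_mul]
      · intro n _ hn
        have hnv : (n:ℕ) ≠ 0 := fun h => hn (Fin.ext h)
        have hnlt : (n:ℕ) < 3*p+3*q-τ+1 := n.isLt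
        have hc : ¬ (((⟨τ, by omega⟩ : Fin (3*p+3*q+1)) : ℕ) = (n:ℕ) ∨
            ((⟨τ, by omega⟩ : Fin (3*p+3*q+1)) : ℕ) = (n:ℕ) + τ) := by
          simp only [Fin.val_mk]
          omega
        have hz : cornerA p q τ ⟨τ, by omega⟩ n = 0 := by
          simp only [cornerA, Matrix.of_apply, if_neg hc]
        show cornerA p q τ ⟨τ, by omega⟩ n * v n = 0
        rw [hz, zero_mul]
      · intro h; exact absurd (Finset.mem_univ _) h
    have hb0 : cornerb p q ⟨0, by omega⟩ = 1 := by simp [cornerb]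
    have hbτ : cornerb p q ⟨τ, by omega⟩ = 0 := by
      have hc : ¬ (((⟨τ, by omega⟩ : Fin (3*p+3*q+1)) : ℕ) = 0 ∨
          ((⟨τ, by omega⟩ : Fin (3*p+3*q+1)) : ℕ) = 3*p ∨
          ((⟨τ, by omega⟩ : Fin (3*p+3*q+1)) : ℕ) = 3*q ∨
          ((⟨τ, by omega⟩ : Fin (3*p+3*q+1)) : ℕ) = 3*p+3*q) := by
        simp only [Fin.val_mk]
        omega
      simp [cornerb, hc]
    have h1 : v n0 = 1 := by rw [← e0, hv, hb0]
    have h2 : v n0 = 0 := by rw [← eτ, hv, hbτ]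
    rw [h1] at h2
    exact one_ne_zero h2
  -- the columns of the augmented matrix
  have hrange : Set.range (cornerAb p q τ).transpose
      = Set.range (cornerA p q τ).transpose ∪ {cornerb p q} := by
    ext x
    simp only [Set.mem_range, Set.mem_union, Set.mem_singleton_iff]
    constructor
    · rintro ⟨n, rfl⟩
      by_cases h : (n:ℕ) < 3*p+3*q-τ+1
      · left
        exact ⟨⟨n, h⟩, by funext m; simp only [cornerAb, Matrix.transpose_apply, Matrix.of_apply, dif_pos h]⟩
      · right
        funext m; simp only [cornerAb, Matrix.transpose_apply, Matrix.of_apply, dif_neg h]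
    · rintro (⟨n, rfl⟩ | rfl)
      · refine ⟨⟨(n:ℕ), by omega⟩, ?_⟩
        funext m
        have h : ((⟨(n:ℕ), by omega⟩ : Fin (3*p+3*q-τ+1+1)) : ℕ) < 3*p+3*q-τ+1 :=
          n.isLt
        simp only [cornerAb, Matrix.transpose_apply, Matrix.of_apply, dif_pos h]
      · refine ⟨⟨3*p+3*q-τ+1, by omega⟩, ?_⟩
        funext m
        simp [cornerAb, Matrix.transpose_apply]
  -- conclude via finrank computations
  rw [Matrix.rank_eq_finrank_span_cols, Matrix.rank_eq_finrank_span_cols]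
  change Module.finrank ℚ ↥(Submodule.span ℚ (Set.range (cornerAb p q τ).transpose)) =
    Module.finrank ℚ ↥(Submodule.span ℚ (Set.range (cornerA p q τ).transpose)) + 1
  rw [hrange,
    Submodule.span_union]
  have hdisj : Disjoint (Submodule.span ℚ (Set.range (cornerA p q τ).transpose))
      (Submodule.span ℚ {cornerb p q}) :=
    Submodule.disjoint_span_singleton.2 (fun h => absurd h hbnotin)
  have hkey := Submodule.finrank_sup_add_finrank_inf_eq
    (Submodule.span ℚ (Set.range (cornerA p q τ).transpose)) (Submodule.span ℚ {cornerb p q})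
  rw [hdisj.eq_bot, finrank_bot, add_zero, finrank_span_singleton hbne] at hkey
  exact hkey
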